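/- Let k < l be odd natural numbers with gcd(k,l) = 1. Then the sequence a : ℕ → ℝ defined by a(n) = (1 + (-1)^(⌊n/k⌋+1))/2 for 0 ≤ n < l and a(n) = 1 - (a(n-k) + a(n-l))/2 for n ≥ l does not converge: there is no real number L such that a(n) → L as n → ∞. -/
import Mathlib

open Filter Finset

namespace Stmt3Aux

lemma block (k : ℕ) (hk : Odd k) (j s : ℕ) (hs : s ≤ k) :
    ∑ n ∈ range s, (-1:ℝ) ^ ((j*k + n) + (j*k + n)/k) =
      if Even s then 0 else 1 := by
  have hk0 : 0 < k := hk.pos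
  have h : ∀ n ∈ range s, (-1:ℝ) ^ ((j*k + n) + (j*k + n)/k) = (-1:ℝ)^n := by
    intro n hn
    have hnk : n < k := lt_of_lt_of_le (mem_range.mp hn) hs
    have hdiv : (j*k + n)/k = j := by
      rw [mul_comm, Nat.mul_add_div hk0, Nat.div_eq_of_lt hnk, add_zero]
    rw [hdiv]
    have he : j*k + n + j = j*(k+1) + n := by ring
    rw [he, pow_add, Even.neg_one_pow (Even.mul_left (hk.add_one) j), one_mul]
  rw [Finset.sum_congr rfl h, neg_one_geom_sum]

lemma gmul (k : ℕ) (hk : Odd k) (j : ℕ) :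
    ∑ n ∈ range (j*k), (-1:ℝ) ^ (n + n/k) = j := by
  induction j with
  | zero => simp
  | succ j ih =>
      have : (j+1)*k = j*k + k := by ring
      rw [this, Finset.sum_range_add, ih, block k hk j k le_rfl,
        if_neg (by simpa using hk)]
      push_cast; ring

lemma gform (k : ℕ) (hk : Odd k) (j s : ℕ) (hs : s ≤ k) :
    ∑ n ∈ range (j*k + s), (-1:ℝ) ^ (n + n/k) =
      j + if Even s then 0 else 1 := by
  rw [Finset.sum_range_add, gmul k hk, block k hk j s hs]

end Stmt3Aux

theorem stmt3 (k l : ℕ) (hk : Odd k) (hl : Odd l) (hkl : k < l)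
    (hgcd : Nat.gcd k l = 1) (a : ℕ → ℝ)
    (h0 : ∀ n < l, a n = (1 + (-1 : ℝ) ^ (n / k + 1)) / 2)
    (h1 : ∀ n, l ≤ n → a n = 1 - (a (n - k) + a (n - l)) / 2) :
    ¬ ∃ L : ℝ, Tendsto a atTop (nhds L) := by
  rintro ⟨L, hL⟩
  have hk0 : 0 < k := hk.pos
  have hlk : Even (l - k) := Nat.Odd.sub_odd hl hk
  set d : ℕ → ℝ := fun n => (-1)^n * (a n - 1/2) with hd
  -- recurrence for d
  have hrec : ∀ n, 2 * d (n + l) = d (n + (l - k)) + d n := by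
    intro n
    have h1' := h1 (n + l) (by omega)
    have e1 : n + l - k = n + (l - k) := by omega
    have e2 : n + l - l = n := by omega
    rw [e1, e2] at h1'
    have sl : (-1:ℝ)^(n+l) = -(-1:ℝ)^n := by
      rw [pow_add, Odd.neg_one_pow hl]; ring
    have slk : (-1:ℝ)^(n+(l-k)) = (-1:ℝ)^n := by
      rw [pow_add, Even.neg_one_pow hlk, mul_one]
    simp only [hd]
    rw [h1', sl, slk]; ring
  -- window sums
  have hW : ∀ m n, ∑ i ∈ range m, d (n+1+i) =
      (∑ i ∈ range m, d (n+i)) + d (n+m) - d n := by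
    intro m n
    induction m with
    | zero => simp
    | succ m ih =>
        rw [Finset.sum_range_succ, Finset.sum_range_succ, ih]
        have : n + 1 + m = n + (m+1) := by omega
        rw [this]; ring
  set S : ℕ → ℝ := fun n => (∑ i ∈ range l, d (n+i)) +
      ∑ i ∈ range k, d (n + (l-k) + i) with hS
  have hSstep : ∀ n, S (n+1) = S n := by
    intro n
    have e3 : ∀ i, n + 1 + (l-k) + i = (n + (l-k)) + 1 + i := fun i => by omega
    have e4 : n + (l-k) + k = n + l := by omega
    simp only [hS]
    calc (∑ i ∈ range l, d (n+1+i)) + ∑ i ∈ range k, d (n + 1 + (l-k) + i)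
        = (∑ i ∈ range l, d (n+1+i)) + ∑ i ∈ range k, d ((n + (l-k)) + 1 + i) := by
          congr 1
          exact Finset.sum_congr rfl fun i _ => by rw [e3 i]
      _ = ((∑ i ∈ range l, d (n+i)) + d (n+l) - d n) +
          ((∑ i ∈ range k, d (n + (l-k) + i)) + d (n + (l-k) + k) - d (n + (l-k))) := by
          rw [hW l n, hW k (n + (l-k))]
      _ = (∑ i ∈ range l, d (n+i)) + ∑ i ∈ range k, d (n + (l-k) + i) := by
          rw [e4]; have := hrec n; linarith
  have hSconst : ∀ n, S n = S 0 := by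
    intro n
    induction n with
    | zero => rfl
    | succ n ih => rw [hSstep n, ih]
  -- p n → 0
  set p : ℕ → ℝ := fun n => d n + d (n+1) with hp
  have ha' : Tendsto (fun n => a n - a (n+1)) atTop (nhds 0) := by
    have := hL.sub (hL.comp (tendsto_add_atTop_nat 1))
    simpa using this
  have hp0 : Tendsto p atTop (nhds 0) := by
    have hb : ∀ n, ‖p n‖ ≤ |a n - a (n+1)| := by
      intro n
      have hpe : p n = (-1:ℝ)^n * (a n - a (n+1)) := by
        simp only [hp, hd, pow_succ]; ring
      rw [hpe]
      simp [abs_mul, abs_pow]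
    exact squeeze_zero_norm hb (by simpa using ha'.abs)
  have hpi : ∀ i : ℕ, Tendsto (fun n => p (n + i)) atTop (nhds 0) :=
    fun i => hp0.comp (tendsto_add_atTop_nat i)
  have hsum : Tendsto (fun n => S n + S (n+1)) atTop (nhds 0) := by
    have heq : (fun n => S n + S (n+1)) = fun n =>
        (∑ i ∈ range l, p (n+i)) + ∑ i ∈ range k, p (n + (l-k) + i) := by
      funext n
      simp only [hS, hp]
      rw [Finset.sum_add_distrib, Finset.sum_add_distrib]
      have e5 : ∀ i, n + 1 + i = n + i + 1 := fun i => by omega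
      have e6 : ∀ i, n + 1 + (l-k) + i = n + (l-k) + i + 1 := fun i => by omega
      have c5 : ∑ i ∈ range l, d (n + 1 + i) = ∑ i ∈ range l, d (n + i + 1) :=
        Finset.sum_congr rfl fun i _ => by rw [e5 i]
      have c6 : ∑ i ∈ range k, d (n + 1 + (l-k) + i) = ∑ i ∈ range k, d (n + (l-k) + i + 1) :=
        Finset.sum_congr rfl fun i _ => by rw [e6 i]
      rw [c5, c6]
      ring
    rw [heq]
    have t1 : Tendsto (fun n => ∑ i ∈ range l, p (n+i)) atTop (nhds 0) := by
      have := tendsto_finset_sum (range l) (fun i _ => hpi i)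
      simpa using this
    have t2 : Tendsto (fun n => ∑ i ∈ range k, p (n + (l-k) + i)) atTop (nhds 0) := by
      have h' : ∀ i : ℕ, Tendsto (fun n => p (n + ((l-k) + i))) atTop (nhds 0) :=
        fun i => hpi ((l-k) + i)
      have := tendsto_finset_sum (range k) (fun i (_ : i ∈ range k) => h' i)
      simp only [← add_assoc] at this
      simpa using this
    simpa using t1.add t2
  have hS0 : S 0 = 0 := by
    have hconst : (fun n => S n + S (n+1)) = fun _ => S 0 + S 0 := by
      funext n; rw [hSconst n, hSconst (n+1)]
    rw [hconst] at hsum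
    have := tendsto_nhds_unique tendsto_const_nhds hsum
    linarith
  -- compute S 0
  have hd_init : ∀ n < l, d n = -(-1:ℝ)^(n + n/k) / 2 := by
    intro n hn
    simp only [hd]
    rw [h0 n hn, pow_add, pow_add, pow_one]
    ring
  set q := l / k with hq
  set r := l % k with hr
  have hq1 : 1 ≤ q := Nat.one_le_div_iff hk0 |>.mpr hkl.le
  have hql : q * k + r = l := by rw [hq, hr, mul_comm]; exact Nat.div_add_mod l k
  have hrk : r < k := Nat.mod_lt l hk0
  have hgl : ∑ n ∈ range l, (-1:ℝ)^(n + n/k) = q + if Even r then 0 else 1 := by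
    rw [← hql]; exact Stmt3Aux.gform k hk q r hrk.le
  have hglk : ∑ n ∈ range (l-k), (-1:ℝ)^(n + n/k) = (q - 1 : ℝ) + if Even r then 0 else 1 := by
    have e7 : l - k = (q-1)*k + r := by
      have h2 : (q-1)*k = q*k - 1*k := Nat.sub_mul q 1 k
      rw [one_mul] at h2
      have h3 : k ≤ q*k := Nat.le_mul_of_pos_left k hq1
      omega
    rw [e7, Stmt3Aux.gform k hk (q-1) r hrk.le]
    have : ((q - 1 : ℕ) : ℝ) = (q : ℝ) - 1 := by
      push_cast [Nat.cast_sub hq1]; ring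
    rw [this]
  have c1 : ∀ i ∈ range l, d (0 + i) = -(-1:ℝ)^(i + i/k) / 2 := by
    intro i hi
    rw [zero_add]; exact hd_init i (mem_range.mp hi)
  have c2 : ∀ i ∈ range k, d (0 + (l-k) + i) = -(-1:ℝ)^((l-k+i) + (l-k+i)/k) / 2 := by
    intro i hi
    rw [zero_add]
    exact hd_init (l-k+i) (by have := mem_range.mp hi; omega)
  have hsplit : (∑ n ∈ range l, (-1:ℝ)^(n + n/k)) =
      (∑ n ∈ range (l-k), (-1:ℝ)^(n + n/k)) +
        ∑ i ∈ range k, (-1:ℝ)^((l-k+i) + (l-k+i)/k) := by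
    conv_lhs => rw [show l = (l-k) + k by omega]
    exact Finset.sum_range_add _ _ _
  have hS0val : S 0 = -(∑ n ∈ range l, (-1:ℝ)^(n + n/k))/2
      - (∑ i ∈ range k, (-1:ℝ)^((l-k+i) + (l-k+i)/k))/2 := by
    simp only [hS]
    rw [Finset.sum_congr rfl c1, Finset.sum_congr rfl c2,
      ← Finset.sum_div, ← Finset.sum_div, Finset.sum_neg_distrib, Finset.sum_neg_distrib]
    ring
  have hqr : (1:ℝ) ≤ q := by exact_mod_cast hq1
  have hc : (0:ℝ) ≤ (if Even r then (0:ℝ) else 1) := by split_ifs <;> norm_num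
  rw [hgl, hglk] at hsplit
  rw [hgl] at hS0val
  have hB : ∑ i ∈ range k, (-1:ℝ)^(l-k+i + (l-k+i)/k) = 1 := by linarith
  rw [hB, hS0] at hS0val
  linarith
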